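/- The ideal sum L(λ) + J equals the ideal ⟨x_0, x_1, …, x_{m−1}⟩ generated by the first m variables of R. -/

import Mathlib

open MvPolynomial
open Fin.NatCast

noncomputable section

/-- `a_j`: the number of parts of the partition `l 1 ≥ l 2 ≥ ⋯ ≥ l r` equal to `j`. -/
def partCount (r : ℕ) (l : ℕ → ℕ) (j : ℕ) : ℕ :=
  ((Finset.Icc 1 r).filter fun i => l i = j).card

/-- The generators of the lexicographic ideal `L(λ)`. -/
def lexGens (k : Type*) [Field k] (m r : ℕ) (l : ℕ → ℕ) :
    Set (MvPolynomial (Fin (m + 1)) k) :=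
  { f | ∃ kk : ℕ, kk + 2 ≤ m ∧
      f = (∏ t ∈ Finset.range kk, X ((t : ℕ) : Fin (m + 1)) ^ partCount r l (m - t)) *
            X ((kk : ℕ) : Fin (m + 1)) ^ (partCount r l (m - kk) + 1) }
  ∪ { (∏ t ∈ Finset.range (m - 1), X ((t : ℕ) : Fin (m + 1)) ^ partCount r l (m - t)) *
        X (((m - 1 : ℕ)) : Fin (m + 1)) ^ partCount r l 1 }

/-- The lexicographic ideal `L(λ)` associated to the partition `λ`. -/
def lexIdeal (k : Type*) [Field k] (m r : ℕ) (l : ℕ → ℕ) :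
    Ideal (MvPolynomial (Fin (m + 1)) k) :=
  Ideal.span (lexGens k m r l)

/-- The monomial ideal `J = ⟨x_0, …, x_{m−λ₁−2}, x_{m−λ₁−1}², x_{m−λ₁}, …, x_{m−1}⟩`:
generated by all variables `x_i` with `0 ≤ i ≤ m−1` except `x_{m−λ₁−1}`, together with
`x_{m−λ₁−1}²`. -/
def Jideal (k : Type*) [Field k] (m l1 : ℕ) : Ideal (MvPolynomial (Fin (m + 1)) k) :=
  Ideal.span
    ({ f | ∃ i : ℕ, i < m ∧ i ≠ m - l1 - 1 ∧ f = X ((i : ℕ) : Fin (m + 1)) }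
      ∪ { (X (((m - l1 - 1 : ℕ)) : Fin (m + 1))) ^ 2 })

/-- The ideal sum `L(λ) + J` equals `⟨x_0, x_1, …, x_{m−1}⟩`. -/
theorem lexIdeal_add_Jideal (k : Type*) [Field k] (m r : ℕ)
    (hr : 1 ≤ r) (l : ℕ → ℕ)
    (hanti : AntitoneOn l (Set.Icc 1 r)) (hpos : ∀ i ∈ Set.Icc 1 r, 1 ≤ l i)
    (hlt : l 1 < m) :
    lexIdeal k m r l + Jideal k m (l 1) =
      Ideal.span { f | ∃ i : ℕ, i < m ∧ f = X ((i : ℕ) : Fin (m + 1)) } := by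
  have hl1 : 1 ≤ l 1 := hpos 1 (Set.mem_Icc.mpr ⟨le_rfl, hr⟩)
  have hm2 : 2 ≤ m := by omega
  have pc0 : ∀ j, l 1 < j → partCount r l j = 0 := by
    intro j hj
    unfold partCount
    rw [Finset.card_eq_zero, Finset.filter_eq_empty_iff]
    intro i hi
    rw [Finset.mem_Icc] at hi
    have : l i ≤ l 1 :=
      hanti (Set.mem_Icc.mpr ⟨le_rfl, hr⟩) (Set.mem_Icc.mpr ⟨hi.1, hi.2⟩) hi.1
    omega
  set I := Ideal.span { f : MvPolynomial (Fin (m+1)) k |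
      ∃ i : ℕ, i < m ∧ f = X ((i : ℕ) : Fin (m + 1)) } with hI
  have hdvd : ∀ (f : MvPolynomial (Fin (m+1)) k) (i : ℕ), i < m →
      X ((i : ℕ) : Fin (m+1)) ∣ f → f ∈ I := by
    rintro f i hi ⟨c, rfl⟩
    exact Ideal.mul_mem_right c I (Ideal.subset_span ⟨i, hi, rfl⟩)
  apply le_antisymm
  · apply sup_le
    · rw [lexIdeal, Ideal.span_le]
      rintro f (⟨kk, hkk, rfl⟩ | rfl)
      · exact hdvd _ kk (by omega)
          (Dvd.dvd.mul_left (dvd_pow_self _ (Nat.succ_ne_zero _)) _)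
      · by_cases h1 : partCount r l 1 = 0
        · have hl2 : 2 ≤ l 1 := by
            by_contra h
            have heq : l 1 = 1 := by omega
            have hmem : 1 ∈ (Finset.Icc 1 r).filter fun i => l i = 1 := by
              simp [Finset.mem_Icc, hr, heq]
            have := Finset.card_pos.mpr ⟨1, hmem⟩
            unfold partCount at h1; omega
          have ht0 : m - l 1 ∈ Finset.range (m - 1) := by
            rw [Finset.mem_range]; omega
          have hpcl : partCount r l (l 1) ≠ 0 := by
            have hmem : 1 ∈ (Finset.Icc 1 r).filter fun i => l i = l 1 := by
              simp [Finset.mem_Icc, hr]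
            have := Finset.card_pos.mpr ⟨1, hmem⟩
            unfold partCount; omega
          refine hdvd _ (m - l 1) (by omega) (Dvd.dvd.mul_right ?_ _)
          have hdp := Finset.dvd_prod_of_mem
            (fun t => (X ((t:ℕ) : Fin (m+1)) : MvPolynomial (Fin (m+1)) k)
              ^ partCount r l (m - t)) ht0
          refine dvd_trans ?_ hdp
          have hml : m - (m - l 1) = l 1 := by omega
          simp only [hml]
          exact dvd_pow_self _ hpcl
        · exact hdvd _ (m - 1) (by omega)
            (Dvd.dvd.mul_left (dvd_pow_self _ h1) _)
    · rw [Jideal, Ideal.span_le]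
      rintro f (⟨i, hi, _, rfl⟩ | rfl)
      · exact hdvd _ i hi dvd_rfl
      · exact hdvd _ (m - l 1 - 1) (by omega) (dvd_pow_self _ two_ne_zero)
  · rw [Ideal.span_le]
    rintro f ⟨i, hi, rfl⟩
    by_cases h : i = m - l 1 - 1
    · subst h
      apply Ideal.mem_sup_left
      apply Ideal.subset_span
      left
      refine ⟨m - l 1 - 1, by omega, ?_⟩
      have hpc1 : partCount r l (m - (m - l 1 - 1)) = 0 := pc0 _ (by omega)
      have hprod : (∏ t ∈ Finset.range (m - l 1 - 1),
          (X ((t:ℕ) : Fin (m+1)) : MvPolynomial (Fin (m+1)) k)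
            ^ partCount r l (m - t)) = 1 := by
        apply Finset.prod_eq_one
        intro t ht
        rw [Finset.mem_range] at ht
        rw [pc0 _ (by omega), pow_zero]
      rw [hprod, hpc1, one_mul, zero_add, pow_one]
    · apply Ideal.mem_sup_right
      exact Ideal.subset_span (Or.inl ⟨i, hi, h, rfl⟩)

end
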